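/- arXiv:2106.08830 — 11 statements merged into one kernel-verified Lean document; each statement's English description precedes it below -/
import Mathlib

section
/- Let f = x_1^2 + ... + x_n^2 in the polynomial ring K[x_1,...,x_n] over a field K of characteristic zero. Then (1/4)·(∂_1^2 + ... + ∂_n^2) applied to f^{s+1} equals (s+1)(s + n/2)·f^s for every natural number s. -/
open MvPolynomial

section Aux

variable {K : Type*} [Field K] {n : ℕ}

private lemma stmt2_hDf (i : Fin n) :
    pderiv i (∑ j : Fin n, X j ^ 2 : MvPolynomial (Fin n) K) = 2 * X i := by
  rw [map_sum]
  simp [pderiv_X, Pi.single_apply]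

private lemma stmt2_key (s : ℕ) (i : Fin n) : pderiv i (pderiv i
      (((∑ j : Fin n, X j ^ 2 : MvPolynomial (Fin n) K)) ^ (s + 1)))
      = ((s : MvPolynomial (Fin n) K) + 1) *
          ((s : MvPolynomial (Fin n) K) * ((∑ j : Fin n, X j ^ 2) ^ (s-1)) * (4 * X i ^ 2)
           + (∑ j : Fin n, X j ^ 2) ^ s * 2) := by
  have h2 : (pderiv i) (2 : MvPolynomial (Fin n) K) = 0 := by
    rw [show (2 : MvPolynomial (Fin n) K) = C 2 from (map_ofNat C 2).symm, pderiv_C]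
  rw [Derivation.leibniz_pow, stmt2_hDf, Nat.add_sub_cancel, map_nsmul, smul_eq_mul,
    Derivation.leibniz, Derivation.leibniz_pow, stmt2_hDf]
  simp only [Derivation.leibniz, h2, pderiv_X_self, smul_eq_mul, nsmul_eq_mul,
    Nat.cast_add, Nat.cast_one]
  ring

private lemma stmt2_hsum (s : ℕ) : ∑ i : Fin n, pderiv i (pderiv i
      (((∑ j : Fin n, X j ^ 2 : MvPolynomial (Fin n) K)) ^ (s + 1)))
    = ((s : MvPolynomial (Fin n) K) + 1) *
        ((s : MvPolynomial (Fin n) K) * ((∑ j : Fin n, X j ^ 2) ^ (s-1) * (∑ j : Fin n, X j ^ 2)) * 4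
         + (n : MvPolynomial (Fin n) K) * ((∑ j : Fin n, X j ^ 2) ^ s * 2)) := by
  rw [Finset.sum_congr rfl fun i _ => stmt2_key s i, ← Finset.mul_sum]
  congr 1
  rw [Finset.sum_add_distrib, Finset.sum_const, Finset.card_univ, Fintype.card_fin,
    nsmul_eq_mul, ← Finset.mul_sum, Finset.mul_sum]
  congr 1
  simp_rw [mul_left_comm ((s : MvPolynomial (Fin n) K) * (∑ j : Fin n, X j ^ 2) ^ (s - 1))
    (4 : MvPolynomial (Fin n) K), ← Finset.mul_sum]
  ring

private lemma stmt2_hsum2 (s : ℕ) :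
    ∑ i : Fin n, pderiv i (pderiv i
      (((∑ j : Fin n, X j ^ 2 : MvPolynomial (Fin n) K)) ^ (s + 1)))
    = (((s:K)+1)*4) • ((s:K) • ((∑ j : Fin n, X j ^ 2) ^ (s-1) * (∑ j : Fin n, X j ^ 2)))
      + (((s:K)+1)*(2*(n:K))) • ((∑ j : Fin n, X j ^ 2) ^ s) := by
  rw [stmt2_hsum]
  simp only [smul_eq_C_mul, map_mul, map_add, map_one, map_ofNat, map_natCast, smul_smul]
  ring

private lemma stmt2_hpow (s : ℕ) :
    (s:K) • ((∑ j : Fin n, X j ^ 2 : MvPolynomial (Fin n) K) ^ (s-1)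
      * (∑ j : Fin n, X j ^ 2))
    = (s:K) • ((∑ j : Fin n, X j ^ 2 : MvPolynomial (Fin n) K) ^ s) := by
  cases s with
  | zero => simp
  | succ t => rw [← pow_succ, Nat.add_sub_cancel]

end Aux

/-- For `f = x_1² + ⋯ + x_n²` over a field `K` of characteristic zero,
`(1/4)(∂_1² + ⋯ + ∂_n²) f^{s+1} = (s+1)(s + n/2) f^s` for every `s ∈ ℕ`. -/
theorem stmt2 (K : Type*) [Field K] [CharZero K] (n : ℕ) (s : ℕ) :
    (1 / 4 : K) •
        (∑ i : Fin n, pderiv i (pderiv i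
          (((∑ j : Fin n, X j ^ 2 : MvPolynomial (Fin n) K)) ^ (s + 1))))
      = (((s : K) + 1) * ((s : K) + (n : K) / 2)) •
          ((∑ j : Fin n, X j ^ 2 : MvPolynomial (Fin n) K)) ^ s := by
  rw [stmt2_hsum2, stmt2_hpow, smul_add, smul_smul, smul_smul, smul_smul, ← add_smul]
  congr 1
  ring
end

section
/- Let f = x_1^{a_1} ⋯ x_n^{a_n} be a monomial in K[x_1,...,x_n] with K a field of characteristic zero and each a_i a positive integer. Then (1/(a_1^{a_1} ⋯ a_n^{a_n}))·∂_1^{a_1} ⋯ ∂_n^{a_n} applied to f^{s+1} equals (∏_{i=1}^{n} ∏_{k=1}^{a_i} (s + k/a_i))·f^s for every natural number s. -/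
open MvPolynomial

private lemma pderiv_pow_monomial {K : Type*} [Field K] [CharZero K] {n : ℕ}
    (i : Fin n) (k : ℕ) (d : Fin n →₀ ℕ) (c : K) (h : k ≤ d i) :
    (((pderiv i).toLinearMap : Module.End K (MvPolynomial (Fin n) K)) ^ k) (monomial d c)
      = monomial (d - Finsupp.single i k) (c * ((d i).descFactorial k : K)) := by
  induction k generalizing d c with
  | zero => simp
  | succ k ih =>
      rw [pow_succ]
      simp only [Module.End.mul_apply]
      rw [show (((pderiv i).toLinearMap : Module.End K (MvPolynomial (Fin n) K)))
            (monomial d c) = pderiv i (monomial d c) from rfl, pderiv_monomial]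
      rw [ih _ _ (by simp [Finsupp.tsub_apply]; omega)]
      congr 1
      · rw [tsub_tsub, ← Finsupp.single_add, add_comm]
      · have hdi : ((d - Finsupp.single i 1 : Fin n →₀ ℕ)) i = d i - 1 := by
          simp [Finsupp.tsub_apply]
        rw [hdi]
        have : d i = (d i - 1) + 1 := by omega
        rw [mul_assoc]
        congr 1
        rw [this, Nat.succ_descFactorial_succ]
        push_cast
        ring

private lemma list_prod_pderiv_monomial {K : Type*} [Field K] [CharZero K] {n : ℕ}
    (a : Fin n → ℕ) (l : List (Fin n)) (hl : l.Nodup) (d : Fin n →₀ ℕ) (c : K)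
    (h : ∀ i ∈ l, a i ≤ d i) :
    (l.map fun i => ((pderiv i).toLinearMap : Module.End K (MvPolynomial (Fin n) K)) ^ a i).prod
        (monomial d c)
      = monomial (d - (l.map fun i => Finsupp.single i (a i)).sum)
          (c * (l.map fun i => ((d i).descFactorial (a i) : K)).prod) := by
  induction l generalizing d c with
  | nil => simp
  | cons i t ih =>
      have hit : i ∉ t := (List.nodup_cons.mp hl).1
      have htn : t.Nodup := (List.nodup_cons.mp hl).2
      simp only [List.map_cons, List.prod_cons, Module.End.mul_apply]
      rw [ih htn d c (fun j hj => h j (List.mem_cons_of_mem _ hj))]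
      have hS : (d - (t.map fun j => Finsupp.single j (a j)).sum) i = d i := by
        rw [Finsupp.tsub_apply]
        have : ((t.map fun j => Finsupp.single j (a j)).sum) i = 0 := by
          rw [← Finsupp.applyAddHom_apply, map_list_sum]
          simp only [List.map_map]
          apply List.sum_eq_zero
          intro x hx
          simp only [List.mem_map, Function.comp] at hx
          obtain ⟨j, hj, rfl⟩ := hx
          simp [Finsupp.applyAddHom_apply, Finsupp.single_apply,
            fun hji : j = i => hit (hji ▸ hj)]
          intro hji; exact absurd (hji ▸ hj) hit
        omega
      rw [pderiv_pow_monomial i (a i) _ _ (by rw [hS]; exact h i (List.mem_cons_self (a := i) (l := t)))]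
      rw [hS]
      congr 1
      · rw [tsub_tsub, List.sum_cons, add_comm]
      · ring

private lemma prod_X_pow_univ {K : Type*} [CommSemiring K] {n : ℕ} (d : Fin n →₀ ℕ) :
    ∏ i, (X i : MvPolynomial (Fin n) K) ^ d i = monomial d 1 := by
  rw [← prod_X_pow_eq_monomial]
  exact (Finset.prod_subset (Finset.subset_univ _)
    (fun x _ hx => by simp [Finsupp.notMem_support_iff.mp hx])).symm

private lemma descFactorial_eq (m s : ℕ) :
    (m * (s + 1)).descFactorial m = ∏ k ∈ Finset.Icc 1 m, (m * s + k) := by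
  rw [Nat.descFactorial_eq_prod_range, ← Finset.prod_range_reflect]
  apply Finset.prod_nbij' (fun j => j + 1) (fun k => k - 1) <;>
    intros <;> simp_all [Finset.mem_Icc, Finset.mem_range, Nat.mul_succ] <;> omega

private lemma coeff_eq {K : Type*} [Field K] [CharZero K] (m s : ℕ) (hm : 0 < m) :
    ∏ k ∈ Finset.Icc 1 m, ((s : K) + (k : K) / (m : K))
      = (((m * (s + 1)).descFactorial m : ℕ) : K) / (m : K) ^ m := by
  have hm0 : (m : K) ≠ 0 := Nat.cast_ne_zero.mpr hm.ne'
  rw [descFactorial_eq]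
  push_cast
  rw [eq_div_iff (pow_ne_zero _ hm0)]
  rw [show ((m : K)) ^ m = ∏ _k ∈ Finset.Icc 1 m, (m : K) by
    rw [Finset.prod_const, Nat.card_Icc]; norm_num]
  rw [← Finset.prod_mul_distrib]
  apply Finset.prod_congr rfl
  intro k _
  field_simp

/-- For the monomial `f = x_1^{a_1} ⋯ x_n^{a_n}` over a field `K` of
characteristic zero (each `a_i > 0`),
`(1/(a_1^{a_1}⋯a_n^{a_n})) ∂_1^{a_1}⋯∂_n^{a_n} f^{s+1}
  = (∏_i ∏_{k=1}^{a_i} (s + k/a_i)) f^s` for every `s ∈ ℕ`. -/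
theorem stmt3 (K : Type*) [Field K] [CharZero K] (n : ℕ) (a : Fin n → ℕ)
    (ha : ∀ i, 0 < a i) (s : ℕ) :
    (1 / ∏ i, (a i : K) ^ a i) •
      ((List.ofFn fun i : Fin n =>
          ((pderiv i).toLinearMap : Module.End K (MvPolynomial (Fin n) K)) ^ a i).prod
        ((∏ i, (X i : MvPolynomial (Fin n) K) ^ a i) ^ (s + 1)))
    = (∏ i, ∏ k ∈ Finset.Icc 1 (a i), ((s : K) + (k : K) / (a i : K))) •
        (∏ i, (X i : MvPolynomial (Fin n) K) ^ a i) ^ s := by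
  classical
  set d1 : Fin n →₀ ℕ := Finsupp.equivFunOnFinite.symm (fun i => a i * (s + 1)) with hd1
  set d0 : Fin n →₀ ℕ := Finsupp.equivFunOnFinite.symm (fun i => a i * s) with hd0
  have hd1i : ∀ i, d1 i = a i * (s + 1) := fun i => rfl
  have hd0i : ∀ i, d0 i = a i * s := fun i => rfl
  have hpow : ∀ m : ℕ, (∏ i, (X i : MvPolynomial (Fin n) K) ^ a i) ^ m
      = monomial (Finsupp.equivFunOnFinite.symm (fun i => a i * m)) 1 := by
    intro m
    rw [← Finset.prod_pow]
    rw [← prod_X_pow_univ (K := K) (Finsupp.equivFunOnFinite.symm (fun i => a i * m))]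
    exact Finset.prod_congr rfl fun i _ => by rw [← pow_mul]; rfl
  rw [hpow (s + 1), hpow s, List.ofFn_eq_map,
    list_prod_pderiv_monomial a (List.finRange n) (List.nodup_finRange n) _ 1
      (fun i _ => by rw [hd1i]; exact Nat.le_mul_of_pos_right _ (Nat.succ_pos s))]
  rw [show (List.map (fun i => Finsupp.single i (a i)) (List.finRange n)).sum
      = ∑ i, Finsupp.single i (a i) by
    rw [← List.ofFn_eq_map, List.sum_ofFn]]
  rw [show (List.map (fun i => (((d1 i).descFactorial (a i) : ℕ) : K)) (List.finRange n)).prod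
      = ∏ i, (((d1 i).descFactorial (a i) : ℕ) : K) by
    rw [← List.ofFn_eq_map, List.prod_ofFn]]
  have hsub : d1 - ∑ i, Finsupp.single i (a i) = d0 := by
    ext j
    rw [Finsupp.tsub_apply, hd1i, hd0i]
    have : (∑ i, Finsupp.single i (a i)) j = a j := by
      rw [Finset.sum_apply']
      simp [Finsupp.single_apply]
    rw [this, Nat.mul_succ]
    omega
  rw [hsub, smul_monomial, smul_monomial]
  congr 1
  rw [smul_eq_mul, smul_eq_mul, one_mul]
  have : ∀ i : Fin n, ∏ k ∈ Finset.Icc 1 (a i), ((s : K) + (k : K) / (a i : K))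
      = (((d1 i).descFactorial (a i) : ℕ) : K) / (a i : K) ^ a i := by
    intro i
    rw [hd1i]
    exact coeff_eq (a i) s (ha i)
  rw [Finset.prod_congr rfl fun i _ => this i, Finset.prod_div_distrib]
  rw [div_eq_mul_inv]; ring
end

section
/- Let K be a field of characteristic zero, A a commutative K-algebra, f ∈ A, and 𝔞 ⊆ A a D-ideal (i.e., D_{A|K}(𝔞) ⊆ 𝔞). If δ(s)·f^{s+1} = b(s)·f^s is a Bernstein–Sato functional equation for f (holding for all s ∈ ℕ), and n ∈ ℕ satisfies f^{n+1} ∈ 𝔞 and f^n ∉ 𝔞, then b(n) = 0. -/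
open Polynomial

/-- The order filtration on `K`-linear differential operators on `A`:
`D^0` consists of multiplication operators, and `δ ∈ D^{n+1}` iff
`[δ, mul_a] ∈ D^n` for every multiplication operator `mul_a`. -/
def IsDiffOpOfOrder (K A : Type*) [CommSemiring K] [CommRing A] [Algebra K A] :
    ℕ → Module.End K A → Prop
  | 0 => fun δ => ∃ a : A, δ = LinearMap.mulLeft K a
  | n + 1 => fun δ => ∀ a : A,
      IsDiffOpOfOrder K A n (δ * LinearMap.mulLeft K a - LinearMap.mulLeft K a * δ)

/-- A differential operator of some finite order. -/
def IsDiffOp (K A : Type*) [CommSemiring K] [CommRing A] [Algebra K A]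
    (δ : Module.End K A) : Prop :=
  ∃ n, IsDiffOpOfOrder K A n δ

/-- `b(s) ∈ K[s]` satisfies a Bernstein–Sato functional equation for `f`:
there is `δ(s) ∈ D_{A|K}[s]` with `δ(s) f^{s+1} = b(s) f^s` for all `s ∈ ℕ`. -/
def SatisfiesBS (K A : Type*) [CommSemiring K] [CommRing A] [Algebra K A]
    (f : A) (b : Polynomial K) : Prop :=
  ∃ δ : Polynomial (Module.End K A),
    (∀ i, IsDiffOp K A (δ.coeff i)) ∧
    ∀ s : ℕ, Polynomial.eval (s : Module.End K A) δ (f ^ (s + 1))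
      = Polynomial.eval (s : K) b • f ^ s

/-- If `𝔞` is a `D`-ideal, `δ(s) f^{s+1} = b(s) f^s` is a
Bernstein–Sato functional equation for `f`, and `f^{n+1} ∈ 𝔞` while `f^n ∉ 𝔞`,
then `b(n) = 0`. -/
theorem stmt6 (K A : Type*) [Field K] [CharZero K] [CommRing A] [Algebra K A]
    (f : A) (I : Ideal A)
    (hD : ∀ δ : Module.End K A, IsDiffOp K A δ → ∀ a ∈ I, δ a ∈ I)
    (δ : Polynomial (Module.End K A)) (hδ : ∀ i, IsDiffOp K A (δ.coeff i))
    (b : Polynomial K)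
    (heq : ∀ s : ℕ, Polynomial.eval (s : Module.End K A) δ (f ^ (s + 1))
      = Polynomial.eval (s : K) b • f ^ s)
    (n : ℕ) (h1 : f ^ (n + 1) ∈ I) (h2 : f ^ n ∉ I) :
    Polynomial.eval (n : K) b = 0 := by
  by_contra hb
  apply h2
  have hmem : Polynomial.eval (n : Module.End K A) δ (f ^ (n + 1)) ∈ I := by
    rw [Polynomial.eval_eq_sum_range, LinearMap.coe_sum, Finset.sum_apply]
    refine Ideal.sum_mem I fun i _ => ?_
    have : ((n : Module.End K A) ^ i) (f ^ (n + 1)) = (n ^ i : ℕ) • f ^ (n + 1) := by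
      rw [← Nat.cast_pow, Module.End.natCast_apply]
    rw [Module.End.mul_apply, this, map_nsmul]
    exact Submodule.smul_of_tower_mem I _ (hD _ (hδ i) _ h1)
  rw [heq n] at hmem
  have : (Polynomial.eval (n : K) b)⁻¹ • (Polynomial.eval (n : K) b • f ^ n) ∈ I := by
    rw [Algebra.smul_def]
    exact Ideal.mul_mem_left I _ hmem
  rwa [inv_smul_smul₀ hb] at this
end

section
/- Let R be a reduced ℕ-graded K-algebra over a field K of characteristic zero such that every differential operator in D_{R|K} has nonnegative degree (with respect to the induced ℤ-grading on D_{R|K}). Then no element f of R of positive degree admits a nonzero Bernstein–Sato functional equation; equivalently, if δ(s)f^{s+1} = b(s)f^s holds for all s ∈ ℕ with δ(s) ∈ D_{R|K}[s] and b(s) ∈ K[s], then b(s) = 0. -/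
open Polynomial

/-- Let `R` be a reduced ℕ-graded `K`-algebra (char 0) such that
every differential operator has nonnegative degree (equivalently, every
differential operator preserves each ideal `[R]_{≥ m}`). Then no homogeneous
element `f ≠ 0` of positive degree admits a nonzero Bernstein–Sato functional
equation: any `b` in a functional equation for `f` is zero. -/
theorem stmt7 (K R : Type*) [Field K] [CharZero K] [CommRing R] [Algebra K R]
    [IsReduced R] (𝒜 : ℕ → Submodule K R) [GradedAlgebra 𝒜]
    (hpos : ∀ δ : Module.End K R, IsDiffOp K R δ →
      ∀ m : ℕ, ∀ x : R, x ∈ (⨆ k ≥ m, 𝒜 k) → δ x ∈ (⨆ k ≥ m, 𝒜 k))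
    (f : R) (w : ℕ) (hw : 0 < w) (hf : f ∈ 𝒜 w) (hf0 : f ≠ 0)
    (b : Polynomial K) (hb : SatisfiesBS K R f b) :
    b = 0 := by
  obtain ⟨δ, hδop, hδ⟩ := hb
  have key : ∀ n : ℕ, Polynomial.eval ((n : ℕ) : K) b = 0 := by
    intro n
    set m := (n + 1) * w with hm
    set I : Submodule K R := ⨆ k ≥ m, 𝒜 k with hI
    have hfm : f ^ (n + 1) ∈ I := by
      have h1 : f ^ (n + 1) ∈ 𝒜 m := by
        simpa [hm] using SetLike.pow_mem_graded (n + 1) hf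
      exact Submodule.mem_iSup_of_mem m (Submodule.mem_iSup_of_mem le_rfl h1)
    have hLHS : Polynomial.eval ((n : ℕ) : Module.End K R) δ (f ^ (n + 1)) ∈ I := by
      rw [Polynomial.eval_eq_sum_range]
      rw [LinearMap.coe_sum, Finset.sum_apply]
      refine Submodule.sum_mem _ fun i _ => ?_
      have h2 : (δ.coeff i * ((n : ℕ) : Module.End K R) ^ i) (f ^ (n + 1))
          = δ.coeff i ((n ^ i : ℕ) • f ^ (n + 1)) := by
        rw [Module.End.mul_apply, ← Nat.cast_pow, Module.End.natCast_apply]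
      rw [h2, map_nsmul]
      exact nsmul_mem (hpos _ (hδop i) m _ hfm) _
    have heq := hδ n
    rw [heq] at hLHS
    -- project to degree n*w component
    by_contra hbn
    have hfn : f ^ n ∈ 𝒜 (n * w) := by simpa using SetLike.pow_mem_graded n hf
    have hproj : (DirectSum.decompose 𝒜 (Polynomial.eval ((n : ℕ) : K) b • f ^ n) (n * w) : R)
        = Polynomial.eval ((n : ℕ) : K) b • f ^ n := by
      rw [DirectSum.decompose_smul]
      have : ((DirectSum.decompose 𝒜 (f ^ n)) (n * w) : R) = f ^ n :=
        DirectSum.decompose_of_mem_same 𝒜 hfn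
      simp only [DirectSum.smul_apply, Submodule.coe_smul, this]
    have hzero : ∀ x ∈ I, (DirectSum.decompose 𝒜 x (n * w) : R) = 0 := by
      intro x hx
      have hle : I ≤ LinearMap.ker ((𝒜 (n * w)).subtype.comp
          ((DirectSum.component K ℕ (fun i => (𝒜 i : Submodule K R)) (n * w)).comp
            (DirectSum.decomposeAlgEquiv 𝒜).toLinearMap)) := by
        refine iSup₂_le fun k hk => ?_
        intro y hy
        have hk' : k ≠ n * w := by
          have : n * w < m := by
            rw [hm]; exact (Nat.mul_lt_mul_right hw).mpr (Nat.lt_succ_self n)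
          omega
        simp only [LinearMap.mem_ker, LinearMap.comp_apply]
        exact DirectSum.decompose_of_mem_ne 𝒜 hy hk'
      exact hle hx
    have : Polynomial.eval ((n : ℕ) : K) b • f ^ n = 0 := by
      rw [← hproj]; exact hzero _ hLHS
    have hfn0 : f ^ n ≠ 0 := fun h => hf0 (IsNilpotent.eq_zero ⟨n, h⟩)
    exact hfn0 (by
      have := congrArg (fun y => (Polynomial.eval ((n : ℕ) : K) b)⁻¹ • y) this
      simpa [smul_smul, inv_mul_cancel₀ hbn] using this)
  refine Polynomial.eq_zero_of_infinite_isRoot b ?_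
  exact Set.infinite_of_injective_forall_mem (f := fun n : ℕ => (n : K))
    Nat.cast_injective (fun n => key n)
end

section
/- Let K be a field of characteristic zero, R ⊆ B an inclusion of K-algebras with an R-linear splitting β : B → R (β restricted to R is the identity). Then for every differential operator ζ ∈ D^n_{B|K} of order at most n, the composite map β ∘ ζ|_R : R → R is a differential operator on R of order at most n, i.e., β ∘ ζ|_R ∈ D^n_{R|K}. -/
open Polynomial

/-- If `R ⊆ B` with an `R`-linear splitting `β : B → R`, then for
every differential operator `ζ ∈ D^n_{B|K}`, the composite `β ∘ ζ|_R` is a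
differential operator on `R` of order at most `n`. -/
theorem stmt8 (K R B : Type*) [Field K] [CharZero K] [CommRing R] [CommRing B]
    [Algebra K R] [Algebra K B] [Algebra R B] [IsScalarTower K R B]
    (β : B →ₗ[R] R) (hβ : ∀ r : R, β (algebraMap R B r) = r)
    (n : ℕ) (ζ : Module.End K B) (hζ : IsDiffOpOfOrder K B n ζ) :
    IsDiffOpOfOrder K R n
      ((β.restrictScalars K) ∘ₗ ζ ∘ₗ ((Algebra.linearMap R B).restrictScalars K)) := by
  induction n generalizing ζ with
  | zero =>
    obtain ⟨b, rfl⟩ := hζ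
    refine ⟨β b, ?_⟩
    ext r
    simp only [LinearMap.coe_comp, LinearMap.coe_restrictScalars, Function.comp_apply,
      Algebra.linearMap_apply, LinearMap.mulLeft_apply]
    rw [show b * algebraMap R B r = r • b by rw [Algebra.smul_def]; ring, map_smul,
      smul_eq_mul, mul_comm]
  | succ n ih =>
    intro r
    have key : (β.restrictScalars K) ∘ₗ ζ ∘ₗ ((Algebra.linearMap R B).restrictScalars K) *
        LinearMap.mulLeft K r - LinearMap.mulLeft K r *
        ((β.restrictScalars K) ∘ₗ ζ ∘ₗ ((Algebra.linearMap R B).restrictScalars K)) =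
        (β.restrictScalars K) ∘ₗ
          (ζ * LinearMap.mulLeft K (algebraMap R B r)
            - LinearMap.mulLeft K (algebraMap R B r) * ζ) ∘ₗ
          ((Algebra.linearMap R B).restrictScalars K) := by
      ext x
      simp only [LinearMap.sub_apply, Module.End.mul_apply, LinearMap.coe_comp,
        LinearMap.coe_restrictScalars, Function.comp_apply, Algebra.linearMap_apply,
        LinearMap.mulLeft_apply, map_sub, map_mul]
      have h2 : ∀ y : B, β (algebraMap R B r * y) = r * β y := fun y => by
        rw [← Algebra.smul_def, map_smul, smul_eq_mul]
      rw [h2]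
    rw [key]
    exact ih _ (hζ (algebraMap R B r))
end

section
/- Let K be a field of characteristic zero, R a direct summand of a K-algebra B via an R-linear splitting β : B → R, and f ∈ R. If f admits a nonzero Bernstein–Sato functional equation in B with polynomial b(s) ∈ K[s], then f admits a nonzero Bernstein–Sato functional equation in R with the same polynomial b(s). Consequently, if both Bernstein–Sato polynomials exist, then b_f^R(s) divides b_f^B(s) in K[s]. -/
open Polynomial

section aux
variable {K A : Type*} [CommSemiring K] [CommRing A] [Algebra K A]

lemma eval_natCast_apply (p : Polynomial (Module.End K A)) (n : ℕ) (x : A) :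
    Polynomial.eval ((n : Module.End K A)) p x
      = ∑ i ∈ p.support, n ^ i • p.coeff i x := by
  rw [Polynomial.eval_eq_sum, Polynomial.sum, LinearMap.sum_apply]
  refine Finset.sum_congr rfl fun i _ => ?_
  rw [Module.End.mul_apply, ← Nat.cast_pow, Module.End.natCast_apply, map_nsmul]

end aux

section T
variable {K R B : Type*} [Field K] [CommRing R] [CommRing B]
  [Algebra K R] [Algebra K B] [Algebra R B] [IsScalarTower K R B]
  (β : B →ₗ[R] R)

noncomputable def Tmap (ζ : Module.End K B) : Module.End K R :=
  (β.restrictScalars K) ∘ₗ ζ ∘ₗ ((Algebra.linearMap R B).restrictScalars K)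

lemma Tmap_apply (ζ : Module.End K B) (r : R) :
    Tmap β ζ r = β (ζ (algebraMap R B r)) := rfl

lemma Tmap_zero : Tmap (K := K) β 0 = 0 := by
  ext r; simp [Tmap_apply]

lemma Tmap_diffop : ∀ n (ζ : Module.End K B), IsDiffOpOfOrder K B n ζ →
    IsDiffOpOfOrder K R n (Tmap β ζ)
  | 0, ζ, ⟨c, hc⟩ => by
    refine ⟨β c, ?_⟩
    ext r
    rw [Tmap_apply, hc, LinearMap.mulLeft_apply, LinearMap.mulLeft_apply,
      mul_comm c, ← Algebra.smul_def, map_smul, smul_eq_mul, mul_comm]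
  | n + 1, ζ, h => by
    intro a
    have key : Tmap β ζ * LinearMap.mulLeft K a - LinearMap.mulLeft K a * Tmap β ζ
        = Tmap β (ζ * LinearMap.mulLeft K (algebraMap R B a)
            - LinearMap.mulLeft K (algebraMap R B a) * ζ) := by
      ext r
      simp only [LinearMap.sub_apply, Module.End.mul_apply, LinearMap.mulLeft_apply,
        Tmap_apply, map_sub, map_mul]
      congr 1
      rw [← Algebra.smul_def, map_smul, smul_eq_mul]
    rw [key]
    exact Tmap_diffop n _ (h (algebraMap R B a))

lemma descend_BS (hβ : ∀ r : R, β (algebraMap R B r) = r) (f : R)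
    (b : Polynomial K) (hBS : SatisfiesBS K B (algebraMap R B f) b) :
    SatisfiesBS K R f b := by
  obtain ⟨δ, hδdiff, hδeq⟩ := hBS
  set δ' : Polynomial (Module.End K R) :=
    ∑ i ∈ δ.support, Polynomial.C (Tmap β (δ.coeff i)) * Polynomial.X ^ i with hδ'
  have hcoeff : ∀ j, δ'.coeff j = Tmap β (δ.coeff j) := by
    intro j
    rw [hδ', Polynomial.finset_sum_coeff]
    simp only [Polynomial.coeff_C_mul, Polynomial.coeff_X_pow, mul_ite, mul_one, mul_zero]
    rw [Finset.sum_ite_eq δ.support j (fun i => Tmap β (δ.coeff i))]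
    by_cases hj : j ∈ δ.support
    · rw [if_pos hj]
    · rw [if_neg hj, Polynomial.notMem_support_iff.mp hj, Tmap_zero]
  refine ⟨δ', fun i => ?_, fun s => ?_⟩
  · obtain ⟨n, hn⟩ := hδdiff i
    exact ⟨n, hcoeff i ▸ Tmap_diffop β n _ hn⟩
  · have hsupp : δ'.support ⊆ δ.support := by
      intro j hj
      by_contra hj'
      exact Polynomial.mem_support_iff.mp hj
        (by rw [hcoeff j, Polynomial.notMem_support_iff.mp hj', Tmap_zero])
    rw [eval_natCast_apply]
    rw [Finset.sum_subset hsupp (fun j _ hj => by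
      rw [Polynomial.notMem_support_iff.mp hj]; simp)]
    have step : ∀ i, (s : ℕ) ^ i • δ'.coeff i (f ^ (s + 1))
        = β ((s : ℕ) ^ i • δ.coeff i (algebraMap R B f ^ (s + 1))) := by
      intro i
      rw [hcoeff i, Tmap_apply, map_pow, map_nsmul]
    calc ∑ i ∈ δ.support, (s:ℕ) ^ i • δ'.coeff i (f ^ (s + 1))
        = β (∑ i ∈ δ.support, (s:ℕ) ^ i • δ.coeff i (algebraMap R B f ^ (s + 1))) := by
          rw [map_sum]; exact Finset.sum_congr rfl fun i _ => step i
      _ = β (Polynomial.eval (s : K) b • algebraMap R B f ^ s) := by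
          rw [← eval_natCast_apply, hδeq s]
      _ = Polynomial.eval (s : K) b • f ^ s := by
          rw [← map_pow]
          have h1 : β (Polynomial.eval (s:K) b • algebraMap R B (f ^ s))
              = Polynomial.eval (s:K) b • β (algebraMap R B (f ^ s)) :=
            map_smul (β.restrictScalars K) _ _
          rw [h1, hβ]

end T


/-- If `R` is a direct summand of `B` (via an `R`-linear splitting
`β`), then every nonzero Bernstein–Sato functional equation for `f ∈ R` in `B`
descends to one in `R` with the same polynomial `b(s)`; consequently, if both
Bernstein–Sato polynomials exist, then `b_f^R ∣ b_f^B`. -/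
theorem stmt9 (K R B : Type*) [Field K] [CharZero K] [CommRing R] [CommRing B]
    [Algebra K R] [Algebra K B] [Algebra R B] [IsScalarTower K R B]
    (β : B →ₗ[R] R) (hβ : ∀ r : R, β (algebraMap R B r) = r) (f : R) :
    (∀ b : Polynomial K, b ≠ 0 → SatisfiesBS K B (algebraMap R B f) b →
      SatisfiesBS K R f b) ∧
    (∀ bR bB : Polynomial K,
      (bR.Monic ∧ SatisfiesBS K R f bR ∧
        ∀ c : Polynomial K, SatisfiesBS K R f c → bR ∣ c) →
      (bB.Monic ∧ SatisfiesBS K B (algebraMap R B f) bB ∧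
        ∀ c : Polynomial K, SatisfiesBS K B (algebraMap R B f) c → bB ∣ c) →
      bR ∣ bB) := by
  constructor
  · intro b _ hb
    exact descend_BS β hβ f b hb
  · rintro bR bB ⟨_, _, hRmin⟩ ⟨_, hBsat, _⟩
    exact hRmin bB (descend_BS β hβ f bB hBsat)
end

section
/- Let K be a field of characteristic zero and suppose R is a differentially extensible direct summand of B (i.e., R is a direct summand of B and every δ ∈ D_{R|K} extends to some δ̃ ∈ D_{B|K} with δ̃|_R = δ). If f ∈ R admits Bernstein–Sato polynomials b_f^R(s) in R and b_f^B(s) in B, then b_f^R(s) = b_f^B(s). -/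
open Polynomial

section Helpers

variable {K A : Type*} [CommSemiring K] [CommRing A] [Algebra K A]

lemma eval_nat_apply (δ : Polynomial (Module.End K A)) (s : ℕ) (x : A) :
    Polynomial.eval ((s : ℕ) : Module.End K A) δ x
      = ∑ i ∈ Finset.range (δ.natDegree + 1), s ^ i • (δ.coeff i x) := by
  rw [Polynomial.eval_eq_sum_range, LinearMap.coe_sum, Finset.sum_apply]
  refine Finset.sum_congr rfl fun i _ => ?_
  rw [Module.End.mul_apply]
  rw [← Nat.cast_pow, Module.End.natCast_apply, map_nsmul]

lemma eval_monomial_sum_apply (n : ℕ) (g : ℕ → Module.End K A) (s : ℕ) (x : A) :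
    Polynomial.eval ((s : ℕ) : Module.End K A) (∑ i ∈ Finset.range n, monomial i (g i)) x
      = ∑ i ∈ Finset.range n, s ^ i • (g i x) := by
  rw [Polynomial.eval_finset_sum, LinearMap.coe_sum, Finset.sum_apply]
  refine Finset.sum_congr rfl fun i _ => ?_
  rw [Polynomial.eval_monomial, Module.End.mul_apply, ← Nat.cast_pow,
    Module.End.natCast_apply, map_nsmul]

lemma coeff_monomial_sum (n : ℕ) (g : ℕ → Module.End K A) (j : ℕ) :
    (∑ i ∈ Finset.range n, monomial i (g i)).coeff j
      = if j ∈ Finset.range n then g j else 0 := by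
  rw [Polynomial.finset_sum_coeff]
  simp [Polynomial.coeff_monomial, Finset.sum_ite_eq']

lemma isDiffOp_zero : IsDiffOp K A (0 : Module.End K A) :=
  ⟨0, 0, by ext x; simp⟩

end Helpers

section Restrict

variable {K R B : Type*} [Field K] [CommRing R] [CommRing B]
    [Algebra K R] [Algebra K B] [Algebra R B] [IsScalarTower K R B]

noncomputable def ιK : R →ₗ[K] B := (IsScalarTower.toAlgHom K R B).toLinearMap

noncomputable def Tres (β : B →ₗ[R] R) (δ : Module.End K B) : Module.End K R :=
  (β.restrictScalars K) ∘ₗ δ ∘ₗ ιK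

lemma Tres_apply (β : B →ₗ[R] R) (δ : Module.End K B) (r : R) :
    Tres β δ r = β (δ (algebraMap R B r)) := rfl

lemma Tres_order (β : B →ₗ[R] R) (n : ℕ) : ∀ δ : Module.End K B, IsDiffOpOfOrder K B n δ →
    IsDiffOpOfOrder K R n (Tres β δ) := by
  induction n with
  | zero =>
    rintro δ ⟨b, rfl⟩
    exact ⟨β b, by
      ext r
      simp only [Tres_apply, LinearMap.mulLeft_apply]
      rw [mul_comm, ← Algebra.smul_def, map_smul, smul_eq_mul, mul_comm]⟩
  | succ n ih =>
    intro δ hδ a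
    have key : Tres β δ * LinearMap.mulLeft K a - LinearMap.mulLeft K a * Tres β δ
        = Tres β (δ * LinearMap.mulLeft K (algebraMap R B a)
            - LinearMap.mulLeft K (algebraMap R B a) * δ) := by
      ext r
      simp only [LinearMap.sub_apply, Module.End.mul_apply, LinearMap.mulLeft_apply,
        Tres_apply, map_sub]
      congr 1
      · rw [map_mul]
      · rw [← Algebra.smul_def, map_smul, smul_eq_mul]
    rw [key]
    exact ih _ (hδ (algebraMap R B a))

lemma satisfiesBS_restrict (β : B →ₗ[R] R) (hβ : ∀ r : R, β (algebraMap R B r) = r) (f : R) (c : Polynomial K)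
    (h : SatisfiesBS K B (algebraMap R B f) c) : SatisfiesBS K R f c := by
  obtain ⟨δ, hcoeff, heq⟩ := h
  refine ⟨∑ i ∈ Finset.range (δ.natDegree + 1), monomial i (Tres β (δ.coeff i)), ?_, ?_⟩
  · intro j
    rw [coeff_monomial_sum]
    split
    · obtain ⟨n, hn⟩ := hcoeff j
      exact ⟨n, Tres_order β n _ hn⟩
    · exact isDiffOp_zero
  · intro s
    rw [eval_monomial_sum_apply]
    have : ∀ i, Tres β (δ.coeff i) (f ^ (s + 1)) = β ((δ.coeff i) ((algebraMap R B f) ^ (s + 1))) := by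
      intro i; rw [Tres_apply, map_pow]
    simp only [this]
    have := heq s
    rw [eval_nat_apply] at this
    calc ∑ i ∈ Finset.range (δ.natDegree + 1), s ^ i • β ((δ.coeff i) ((algebraMap R B f) ^ (s + 1)))
        = β (∑ i ∈ Finset.range (δ.natDegree + 1), s ^ i • (δ.coeff i) ((algebraMap R B f) ^ (s + 1))) := by
          rw [map_sum]; exact Finset.sum_congr rfl fun i _ => (map_nsmul β _ _).symm
      _ = β (Polynomial.eval (s : K) c • (algebraMap R B f) ^ s) := by rw [this]
      _ = Polynomial.eval (s : K) c • f ^ s := by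
          rw [← map_pow, β.map_smul_of_tower, hβ]

end Restrict

section Extend

variable {K R B : Type*} [Field K] [CommRing R] [CommRing B]
    [Algebra K R] [Algebra K B] [Algebra R B] [IsScalarTower K R B]

lemma satisfiesBS_extend
    (hext : ∀ δ : Module.End K R, IsDiffOp K R δ →
      ∃ δt : Module.End K B, IsDiffOp K B δt ∧
        ∀ r : R, δt (algebraMap R B r) = algebraMap R B (δ r))
    (f : R) (c : Polynomial K)
    (h : SatisfiesBS K R f c) : SatisfiesBS K B (algebraMap R B f) c := by
  obtain ⟨δ, hcoeff, heq⟩ := h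
  choose g hg1 hg2 using fun i => hext (δ.coeff i) (hcoeff i)
  refine ⟨∑ i ∈ Finset.range (δ.natDegree + 1), monomial i (g i), ?_, ?_⟩
  · intro j
    rw [coeff_monomial_sum]
    split
    · exact hg1 j
    · exact isDiffOp_zero
  · intro s
    rw [eval_monomial_sum_apply]
    have hfe : (algebraMap R B f) ^ (s + 1) = algebraMap R B (f ^ (s + 1)) := (map_pow _ _ _).symm
    rw [hfe]
    simp only [hg2]
    have := heq s
    rw [eval_nat_apply] at this
    calc ∑ i ∈ Finset.range (δ.natDegree + 1), s ^ i • algebraMap R B ((δ.coeff i) (f ^ (s + 1)))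
        = algebraMap R B (∑ i ∈ Finset.range (δ.natDegree + 1), s ^ i • (δ.coeff i) (f ^ (s + 1))) := by
          rw [map_sum]; exact Finset.sum_congr rfl fun i _ => (map_nsmul (algebraMap R B) _ _).symm
      _ = algebraMap R B (Polynomial.eval (s : K) c • f ^ s) := by rw [this]
      _ = Polynomial.eval (s : K) c • (algebraMap R B f) ^ s := by
          rw [Algebra.smul_def, Algebra.smul_def, map_mul, map_pow,
            ← IsScalarTower.algebraMap_apply]

end Extend

/-- If `R` is a differentially extensible direct summand of `B`
(every differential operator on `R` extends to one on `B`), and `f ∈ R` admits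
Bernstein–Sato polynomials `b_f^R` in `R` and `b_f^B` in `B`, then they are equal. -/

theorem stmt10 (K R B : Type*) [Field K] [CharZero K] [CommRing R] [CommRing B]
    [Algebra K R] [Algebra K B] [Algebra R B] [IsScalarTower K R B]
    (β : B →ₗ[R] R) (hβ : ∀ r : R, β (algebraMap R B r) = r)
    (hext : ∀ δ : Module.End K R, IsDiffOp K R δ →
      ∃ δt : Module.End K B, IsDiffOp K B δt ∧
        ∀ r : R, δt (algebraMap R B r) = algebraMap R B (δ r))
    (f : R) (bR bB : Polynomial K)
    (hR : bR.Monic ∧ SatisfiesBS K R f bR ∧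
      ∀ c : Polynomial K, SatisfiesBS K R f c → bR ∣ c)
    (hB : bB.Monic ∧ SatisfiesBS K B (algebraMap R B f) bB ∧
      ∀ c : Polynomial K, SatisfiesBS K B (algebraMap R B f) c → bB ∣ c) :
    bR = bB := by
  have h1 : bR ∣ bB := hR.2.2 bB (satisfiesBS_restrict β hβ f bB hB.2.1)
  have h2 : bB ∣ bR := hB.2.2 bR (satisfiesBS_extend hext f bR hR.2.1)
  exact Polynomial.eq_of_monic_of_associated hR.1 hB.1 (associated_of_dvd_dvd h1 h2)
end

section
/- Let K be a field of characteristic zero, A a polynomial ring over K, and f ∈ A nonzero. For δ(s) ∈ D_{A|K}[s], the following are equivalent: (1) δ(n)·f^n = 0 in A for all n ∈ ℕ; (2) δ(n)·f^n = 0 in A_f for all n ∈ ℤ; (3) δ(n)·f^n = 0 in A_f for infinitely many n ∈ ℤ. -/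
open Polynomial

section Antider

lemma antider (K : Type*) {L : Type*} [Field K] [CharZero K] [CommRing L] [Algebra K L]
    (p : Polynomial L) : ∃ P : Polynomial L,
    ∀ n : ℤ, P.eval (((n+1 : ℤ)) : L) - P.eval ((n : ℤ) : L) = p.eval ((n : ℤ) : L) := by
  induction p using Polynomial.induction_on' with
  | add p q hp hq =>
    obtain ⟨P, hP⟩ := hp; obtain ⟨Q, hQ⟩ := hq
    exact ⟨P + Q, fun n => by simp only [eval_add]; rw [← hP n, ← hQ n]; ring⟩
  | monomial k a =>
    set φ : ℚ →+* L := (algebraMap K L).comp (algebraMap ℚ K) with hφ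
    set B : Polynomial ℚ := Polynomial.bernoulli (k+1) with hB
    refine ⟨C (a * algebraMap K L (((k : K)+1)⁻¹)) * (B.map φ), fun n => ?_⟩
    have h1 : ∀ m : ℤ, (B.map φ).eval ((m : ℤ) : L) = φ (B.eval ((m : ℤ) : ℚ)) := by
      intro m
      rw [← map_intCast φ (m : ℤ), Polynomial.eval_map, Polynomial.eval₂_at_apply]
    have h2 : B.eval (((n+1 : ℤ)) : ℚ) - B.eval ((n : ℤ) : ℚ)
        = ((k+1 : ℕ) : ℚ) * ((n : ℤ) : ℚ) ^ k := by
      have := Polynomial.bernoulli_eval_one_add (k+1) ((n : ℤ) : ℚ)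
      push_cast at this ⊢
      rw [add_comm (1 : ℚ)] at this
      rw [this]; ring
    have h3 : φ (((k+1 : ℕ) : ℚ)) = algebraMap K L ((k : K) + 1) := by
      simp [hφ]
    have h4 : algebraMap K L (((k : K)+1)⁻¹) * algebraMap K L ((k : K) + 1) = 1 := by
      rw [← map_mul, inv_mul_cancel₀ (by exact_mod_cast Nat.cast_add_one_ne_zero (R := K) k),
        map_one]
    simp only [eval_mul, eval_C, eval_monomial]
    rw [h1, h1]
    rw [← mul_sub, ← map_sub φ, h2, map_mul, map_pow, h3, map_intCast]
    linear_combination (a * ((n : ℤ) : L) ^ k) * h4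
end Antider

lemma poly_of_diff (K : Type*) {L : Type*} [Field K] [CharZero K] [CommRing L] [Algebra K L]
    (g : ℤ → L) (p : Polynomial L) (h : ∀ n : ℤ, g (n+1) - g n = p.eval ((n : ℤ) : L)) :
    ∃ q : Polynomial L, ∀ n : ℤ, g n = q.eval ((n : ℤ) : L) := by
  obtain ⟨P, hP⟩ := antider K p
  have hconst : ∀ n : ℤ, g n - P.eval ((n : ℤ) : L) = g 0 - P.eval (((0:ℤ)) : L) := by
    intro n
    induction n using Int.induction_on with
    | zero => rfl
    | succ m ih =>
      have h1 := h m
      have h2 := hP m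
      push_cast at ih h1 h2 ⊢
      linear_combination ih + h1 - h2
    | pred m ih =>
      have h1 := h (-m-1)
      have h2 := hP (-m-1)
      push_cast at ih h1 h2 ⊢
      ring_nf at ih h1 h2 ⊢
      linear_combination ih - h1 + h2
  refine ⟨P + C (g 0 - P.eval (((0:ℤ)) : L)), fun n => ?_⟩
  rw [eval_add, eval_C, ← hconst n]
  ring

lemma key (K : Type*) {L : Type*} [Field K] [CharZero K] [CommRing L] [Algebra K L]
    (u : Lˣ) : ∀ (m : ℕ) (δ : Module.End K L), IsDiffOpOfOrder K L m δ →
    ∃ q : Polynomial L, ∀ n : ℤ,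
      δ ((u ^ n : Lˣ) : L) = ((u ^ n : Lˣ) : L) * q.eval ((n : ℤ) : L) := by
  intro m
  induction m with
  | zero =>
    rintro δ ⟨a, rfl⟩
    exact ⟨C a, fun n => by simp [LinearMap.mulLeft_apply, mul_comm]⟩
  | succ m ih =>
    intro δ hδ
    obtain ⟨q', hq'⟩ := ih _ (hδ (u : L))
    have hrel : ∀ n : ℤ, δ ((u ^ (n+1) : Lˣ) : L)
        = ((u ^ n : Lˣ) : L) * q'.eval ((n : ℤ) : L) + (u : L) * δ ((u ^ n : Lˣ) : L) := by
      intro n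
      have h1 := hq' n
      simp only [LinearMap.sub_apply, Module.End.mul_apply, LinearMap.mulLeft_apply] at h1
      have h2 : ((u ^ (n+1) : Lˣ) : L) = (u : L) * ((u ^ n : Lˣ) : L) := by
        rw [← Units.val_mul, ← zpow_one_add u n, add_comm]
      rw [h2]
      linear_combination h1
    set g : ℤ → L := fun n => ((u ^ (-n) : Lˣ) : L) * δ ((u ^ n : Lˣ) : L) with hg
    have hstep : ∀ n : ℤ, g (n+1) - g n = (C ((u⁻¹ : Lˣ) : L) * q').eval ((n : ℤ) : L) := by
      intro n
      simp only [hg, eval_mul, eval_C]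
      rw [hrel n]
      have e1 : ((u ^ (-(n+1)) : Lˣ) : L) * ((u ^ n : Lˣ) : L) = ((u⁻¹ : Lˣ) : L) := by
        rw [← Units.val_mul, ← zpow_add u]; norm_num
      have e2 : ((u ^ (-(n+1)) : Lˣ) : L) * (u : L) = ((u ^ (-n) : Lˣ) : L) := by
        rw [show (u : L) = ((u ^ (1:ℤ) : Lˣ) : L) by norm_num, ← Units.val_mul, ← zpow_add u]
        norm_num
      linear_combination q'.eval ((n:ℤ):L) * e1 + δ ((u^n : Lˣ) : L) * e2
    obtain ⟨q0, hq0⟩ := poly_of_diff K g _ hstep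
    refine ⟨q0, fun n => ?_⟩
    have e3 : ((u ^ n : Lˣ) : L) * ((u ^ (-n) : Lˣ) : L) = 1 := by
      rw [← Units.val_mul, ← zpow_add u]; norm_num
    have := hq0 n
    simp only [hg] at this
    calc δ ((u ^ n : Lˣ) : L)
        = ((u ^ n : Lˣ) : L) * (((u ^ (-n) : Lˣ) : L) * δ ((u ^ n : Lˣ) : L)) := by
          rw [← mul_assoc, e3, one_mul]
      _ = ((u ^ n : Lˣ) : L) * q0.eval ((n : ℤ) : L) := by rw [this]

lemma evalEnd (K : Type*) {L : Type*} [Field K] [CharZero K] [CommRing L] [Algebra K L]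
    (p : Polynomial (Module.End K L)) (N : ℕ) (hN : p.natDegree < N) (n : ℤ) (x : L) :
    p.eval ((n : ℤ) : Module.End K L) x
      = ∑ i ∈ Finset.range N, ((n : ℤ) : L) ^ i * (p.coeff i x) := by
  rw [Polynomial.eval_eq_sum_range' hN]
  rw [LinearMap.coe_sum, Finset.sum_apply]
  refine Finset.sum_congr rfl fun i _ => ?_
  have h1 : (((n : ℤ) : Module.End K L)) ^ i = ((n ^ i : ℤ) : Module.End K L) := by
    push_cast; ring
  rw [Module.End.mul_apply, h1, Module.End.intCast_apply, map_zsmul, zsmul_eq_mul]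
  push_cast; ring


/-- For a polynomial ring `A` over a field `K` of characteristic
zero, `f ≠ 0`, and `δ(s) ∈ D_{A|K}[s]` (with extension `δ̂(s)` to the
localization `A_f`), the following are equivalent: (1) `δ(n) f^n = 0` in `A` for
all `n ∈ ℕ`; (2) `δ(n) f^n = 0` in `A_f` for all `n ∈ ℤ`; (3) `δ(n) f^n = 0` in
`A_f` for infinitely many `n ∈ ℤ`. -/
theorem stmt13 (K : Type*) [Field K] [CharZero K] (d : ℕ)
    (f : MvPolynomial (Fin d) K) (hf : f ≠ 0)
    (δ : Polynomial (Module.End K (MvPolynomial (Fin d) K)))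
    (hδ : ∀ i, IsDiffOp K (MvPolynomial (Fin d) K) (δ.coeff i))
    (δhat : Polynomial (Module.End K (Localization.Away f)))
    (hδhat : ∀ i, IsDiffOp K (Localization.Away f) (δhat.coeff i))
    (hcomp : ∀ i, ∀ a : MvPolynomial (Fin d) K,
      δhat.coeff i (algebraMap (MvPolynomial (Fin d) K) (Localization.Away f) a)
        = algebraMap (MvPolynomial (Fin d) K) (Localization.Away f) (δ.coeff i a)) :
    let u : (Localization.Away f)ˣ :=
      (IsLocalization.map_units (M := Submonoid.powers f) (Localization.Away f)
        ⟨f, 1, pow_one f⟩).unit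
    ((∀ n : ℕ, Polynomial.eval (n : Module.End K (MvPolynomial (Fin d) K)) δ
          (f ^ n) = 0) ↔
      (∀ n : ℤ, Polynomial.eval (n : Module.End K (Localization.Away f)) δhat
          ((u ^ n : (Localization.Away f)ˣ) : Localization.Away f) = 0)) ∧
    ((∀ n : ℤ, Polynomial.eval (n : Module.End K (Localization.Away f)) δhat
          ((u ^ n : (Localization.Away f)ˣ) : Localization.Away f) = 0) ↔
      {n : ℤ | Polynomial.eval (n : Module.End K (Localization.Away f)) δhat
          ((u ^ n : (Localization.Away f)ˣ) : Localization.Away f) = 0}.Infinite) := by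
  intro u
  have hle : Submonoid.powers f ≤ nonZeroDivisors (MvPolynomial (Fin d) K) := by
    rintro x ⟨k, rfl⟩
    exact mem_nonZeroDivisors_of_ne_zero (pow_ne_zero k hf)
  haveI : IsDomain (Localization.Away f) := IsLocalization.isDomain_localization hle
  have hinj : Function.Injective (algebraMap (MvPolynomial (Fin d) K) (Localization.Away f)) := IsLocalization.injective (Localization.Away f) hle
  haveI : CharZero (Localization.Away f) := charZero_of_injective_algebraMap hinj
  have hu : (u : (Localization.Away f)) = algebraMap (MvPolynomial (Fin d) K) (Localization.Away f) f := IsUnit.unit_spec _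
  -- choose polynomials for each coefficient of δhat
  have hqex : ∀ i, ∃ q : Polynomial (Localization.Away f), ∀ n : ℤ,
      δhat.coeff i ((u ^ n : (Localization.Away f)ˣ) : (Localization.Away f)) = ((u ^ n : (Localization.Away f)ˣ) : (Localization.Away f)) * q.eval ((n : ℤ) : (Localization.Away f)) :=
    fun i => (hδhat i).elim fun m hm => key K u m _ hm
  choose q hq using hqex
  set N : ℕ := max δ.natDegree δhat.natDegree + 1 with hN
  set Q : Polynomial (Localization.Away f) := ∑ i ∈ Finset.range N, X ^ i * q i with hQ
  set F : ℤ → (Localization.Away f) := fun n => Polynomial.eval ((n : ℤ) : Module.End K (Localization.Away f)) δhat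
      ((u ^ n : (Localization.Away f)ˣ) : (Localization.Away f)) with hF
  have fact1 : ∀ n : ℤ, F n = ((u ^ n : (Localization.Away f)ˣ) : (Localization.Away f)) * Q.eval ((n : ℤ) : (Localization.Away f)) := by
    intro n
    simp only [hF]
    rw [evalEnd K δhat N (by omega) n]
    rw [hQ, eval_finset_sum, Finset.mul_sum]
    refine Finset.sum_congr rfl fun i _ => ?_
    rw [hq i n, eval_mul, eval_pow, eval_X]
    ring
  have fact2 : ∀ n : ℕ, F (n : ℤ) = algebraMap (MvPolynomial (Fin d) K) (Localization.Away f)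
      (Polynomial.eval ((n : ℕ) : Module.End K (MvPolynomial (Fin d) K)) δ (f ^ n)) := by
    intro n
    have hcast : ((n : ℕ) : Module.End K (MvPolynomial (Fin d) K)) = (((n : ℕ) : ℤ) : Module.End K (MvPolynomial (Fin d) K)) := by
      push_cast; ring
    have hun : ((u ^ (n : ℤ) : (Localization.Away f)ˣ) : (Localization.Away f)) = algebraMap (MvPolynomial (Fin d) K) (Localization.Away f) (f ^ n) := by
      rw [zpow_natCast, Units.val_pow_eq_pow_val, hu, map_pow]
    simp only [hF]
    rw [evalEnd K δhat N (by omega) (n : ℤ)]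
    rw [hcast, evalEnd K δ N (by omega) (n : ℤ), map_sum]
    refine Finset.sum_congr rfl fun i _ => ?_
    rw [hun, hcomp i, map_mul]
    congr 1
    rw [map_pow, map_intCast]
  -- infinitely many zeros implies Q = 0 implies all zeros
  have hinf : {n : ℤ | F n = 0}.Infinite → ∀ n : ℤ, F n = 0 := by
    intro hS n
    have hQ0 : Q = 0 := by
      apply Polynomial.eq_zero_of_infinite_isRoot
      apply Set.Infinite.mono (s := (fun m : ℤ => ((m : ℤ) : (Localization.Away f))) '' {n : ℤ | F n = 0})
      · rintro x ⟨m, hm, rfl⟩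
        show Q.eval ((m : ℤ) : Localization.Away f) = 0
        have h := fact1 m
        rw [hm] at h
        exact (Units.mul_right_eq_zero (u ^ m)).mp h.symm
      · exact hS.image (Set.injOn_of_injective (fun a b h => by exact_mod_cast h))
    rw [fact1 n, hQ0, eval_zero, mul_zero]
  constructor
  · constructor
    · intro h1
      apply hinf
      refine Set.infinite_of_injective_forall_mem (f := fun m : ℕ => (m : ℤ))
        (fun a b h => by simpa using h) ?_
      intro m
      show F (m : ℤ) = 0
      rw [fact2 m, h1 m, map_zero]
    · intro h2 n
      apply hinj
      rw [← fact2 n, map_zero]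
      exact h2 (n : ℤ)
  · constructor
    · intro h2
      have : {n : ℤ | F n = 0} = Set.univ := Set.eq_univ_of_forall h2
      rw [show {n : ℤ | Polynomial.eval ((n:ℤ) : Module.End K (Localization.Away f)) δhat
          ((u ^ n : (Localization.Away f)ˣ) : (Localization.Away f)) = 0} = {n : ℤ | F n = 0} from rfl, this]
      exact Set.infinite_univ
    · exact hinf
end

section
/- Let K be a field of characteristic zero, A a K-algebra, f ∈ A a nonzerodivisor, and g ∈ A nonzero. Suppose the relative Bernstein–Sato polynomial b_{f,g}(s) exists (the monic minimal-degree b with δ(s)·g·f^{s+1} = b(s)·g·f^s for some δ(s) ∈ D_{A|K}[s]). If g ∈ (f^{n-1}) but g ∉ (f^n) for some positive integer n, then b_{f,g}(-n) = 0. -/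
open Polynomial

/-- `b(s) ∈ K[s]` satisfies a relative Bernstein–Sato functional equation for
`f` with respect to `g`: there is `δ(s) ∈ D_{A|K}[s]` with
`δ(s)·g·f^{s+1} = b(s)·g·f^s` for all `s ∈ ℕ`. -/
def SatisfiesRelBS (K A : Type*) [CommSemiring K] [CommRing A] [Algebra K A]
    (f g : A) (b : Polynomial K) : Prop :=
  ∃ δ : Polynomial (Module.End K A),
    (∀ i, IsDiffOp K A (δ.coeff i)) ∧
    ∀ s : ℕ, Polynomial.eval (s : Module.End K A) δ (g * f ^ (s + 1))
      = Polynomial.eval (s : K) b • (g * f ^ s)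

/-- `b` is *the* relative Bernstein–Sato polynomial `b_{f,g}`: the monic
minimal-degree (equivalently, monic generating) polynomial satisfying a relative
functional equation. -/
def IsRelBSPoly (K A : Type*) [CommSemiring K] [CommRing A] [Algebra K A]
    (f g : A) (b : Polynomial K) : Prop :=
  b.Monic ∧ SatisfiesRelBS K A f g b ∧
    ∀ c : Polynomial K, SatisfiesRelBS K A f g c → b ∣ c

section Aux
variable (K : Type*) {A : Type*} [CommSemiring K] [CommRing A] [Algebra K A]

lemma mulLeft_comm_sub (a b : A) :
    LinearMap.mulLeft K a * LinearMap.mulLeft K b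
      - LinearMap.mulLeft K b * LinearMap.mulLeft K a = 0 := by
  ext x
  simp [LinearMap.mulLeft_apply, mul_left_comm, mul_comm]

lemma isDiffOpOfOrder_succ {m : ℕ} {δ : Module.End K A}
    (h : IsDiffOpOfOrder K A m δ) : IsDiffOpOfOrder K A (m+1) δ := by
  induction m generalizing δ with
  | zero =>
    obtain ⟨a, rfl⟩ := h
    intro b
    exact ⟨0, by rw [LinearMap.mulLeft_zero_eq_zero, mulLeft_comm_sub]⟩
  | succ m ih =>
    intro a
    exact ih (h a)

lemma isDiffOpOfOrder_mono {m m' : ℕ} {δ : Module.End K A} (hm : m ≤ m')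
    (h : IsDiffOpOfOrder K A m δ) : IsDiffOpOfOrder K A m' δ := by
  induction m' with
  | zero => exact (Nat.le_zero.mp hm) ▸ h
  | succ m' ih =>
    rcases Nat.lt_or_ge m (m'+1) with h1 | h1
    · exact isDiffOpOfOrder_succ K (ih (Nat.lt_succ_iff.mp h1))
    · exact (Nat.le_antisymm hm h1) ▸ h

lemma isDiffOpOfOrder_zero_op (m : ℕ) : IsDiffOpOfOrder K A m (0 : Module.End K A) :=
  isDiffOpOfOrder_mono K (Nat.zero_le m)
    ⟨0, (LinearMap.mulLeft_zero_eq_zero K A).symm⟩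

/-- the commutator with multiplication by `f` -/
def brk (f : A) (ε : Module.End K A) : Module.End K A :=
  ε * LinearMap.mulLeft K f - LinearMap.mulLeft K f * ε

lemma brk_iterate_zero (f : A) (j : ℕ) : (brk K f)^[j] 0 = 0 := by
  induction j with
  | zero => rfl
  | succ j ih => rw [Function.iterate_succ_apply, brk, zero_mul, mul_zero, sub_self, ih]

lemma brk_iterate_eq_zero {f : A} {m : ℕ} {δ : Module.End K A}
    (h : IsDiffOpOfOrder K A m δ) {j : ℕ} (hj : m < j) : (brk K f)^[j] δ = 0 := by
  induction m generalizing δ j with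
  | zero =>
    obtain ⟨a, rfl⟩ := h
    obtain ⟨t, rfl⟩ : ∃ t, j = t + 1 := ⟨j - 1, by omega⟩
    rw [Function.iterate_succ_apply]
    have : (brk K f) (LinearMap.mulLeft K a) = 0 := mulLeft_comm_sub K a f
    rw [this, brk_iterate_zero]
  | succ m ih =>
    obtain ⟨t, rfl⟩ : ∃ t, j = t + 1 := ⟨j - 1, by omega⟩
    rw [Function.iterate_succ_apply]
    exact ih (h f) (by omega)

lemma brk_apply (f : A) (ε : Module.End K A) (x : A) :
    ε (f * x) = f * ε x + (brk K f ε) x := by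
  simp [brk, LinearMap.sub_apply, Module.End.mul_apply, LinearMap.mulLeft_apply]

end Aux

section Aux2
variable (K : Type*) {A : Type*} [CommSemiring K] [CommRing A] [Algebra K A]

lemma expand (f : A) (ε : Module.End K A) (m : ℕ) (x : A) :
    ε (f ^ m * x) = ∑ j ∈ Finset.range (m+1),
      m.choose j • (f ^ (m - j) * ((brk K f)^[j] ε) x) := by
  induction m generalizing x with
  | zero => simp
  | succ m ih =>
    have h1 : f ^ (m+1) * x = f ^ m * (f * x) := by ring
    rw [h1, ih (f * x)]
    have h2 : ∀ j ∈ Finset.range (m+1),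
        m.choose j • (f ^ (m - j) * ((brk K f)^[j] ε) (f * x))
        = m.choose j • (f ^ (m + 1 - j) * ((brk K f)^[j] ε) x)
          + m.choose j • (f ^ (m - j) * ((brk K f)^[j+1] ε) x) := by
      intro j hj
      rw [Finset.mem_range] at hj
      rw [brk_apply K f ((brk K f)^[j] ε) x, ← Function.iterate_succ_apply' (brk K f),
        mul_add, smul_add]
      congr 2
      have hp : f ^ (m - j) * f = f ^ (m + 1 - j) := by
        rw [← pow_succ]; congr 1; omega
      rw [← mul_assoc, hp]
    rw [Finset.sum_congr rfl h2, Finset.sum_add_distrib]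
    -- RHS side
    rw [Finset.sum_range_succ' _ (m+1)]
    have h3 : ∀ j ∈ Finset.range (m+1),
        (m+1).choose (j+1) • (f ^ (m + 1 - (j+1)) * ((brk K f)^[j+1] ε) x)
        = m.choose j • (f ^ (m - j) * ((brk K f)^[j+1] ε) x)
          + m.choose (j+1) • (f ^ (m - j) * ((brk K f)^[j+1] ε) x) := by
      intro j hj
      rw [Nat.choose_succ_succ, Nat.succ_sub_succ, add_smul]
    rw [Finset.sum_congr rfl h3, Finset.sum_add_distrib]
    -- LHS first sum: peel j = 0
    rw [Finset.sum_range_succ' _ m]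
    -- second RHS sum: extend to m+1 terms? we need Σ_{j<m+1} C(m,j+1)•(f^{m-j}*u(j+1))
    rw [Finset.sum_range_succ
      (fun j => m.choose (j+1) • (f ^ (m - j) * ((brk K f)^[j+1] ε) x)) m]
    simp only [Nat.choose_succ_self, zero_smul, add_zero, Nat.choose_zero_right,
      Nat.sub_zero, one_smul, Nat.choose_self]
    have h4 : ∀ j ∈ Finset.range m,
        m.choose (j+1) • (f ^ (m + 1 - (j+1)) * ((brk K f)^[j+1] ε) x)
        = m.choose (j+1) • (f ^ (m - j) * ((brk K f)^[j+1] ε) x) := by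
      intro j hj; rw [Nat.succ_sub_succ]
    rw [Finset.sum_congr rfl h4]
    abel

end Aux2


lemma aux_unit (K : Type*) {A : Type*} [Field K] [CharZero K] [CommRing A] [Algebra K A] {i j : ℕ} (hij : i ≠ j) : IsUnit ((i : A) - (j : A)) := by
  have : ((i : A) - (j : A)) = algebraMap K A ((i : K) - (j : K)) := by
    push_cast; ring
  rw [this]
  refine IsUnit.map _ (isUnit_iff_ne_zero.2 ?_)
  intro h
  exact hij (Nat.cast_injective (sub_eq_zero.mp h))

lemma poly_zero_of_eval (K : Type*) {A : Type*} [Field K] [CharZero K] [CommRing A] [Algebra K A] (N : ℕ) : ∀ (P : Polynomial A) (d : ℕ), P.natDegree ≤ N →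
    (∀ m : ℕ, d ≤ m → P.eval ((m : ℕ) : A) = 0) → P = 0 := by
  induction N with
  | zero =>
    intro P d hdeg h
    have h0 := h d le_rfl
    rw [Polynomial.eq_C_of_natDegree_le_zero hdeg] at h0 ⊢
    rw [Polynomial.eval_C] at h0
    rw [h0, map_zero]
  | succ N ih =>
    intro P d hdeg h
    nontriviality A
    have hroot : Polynomial.IsRoot P ((d : ℕ) : A) := h d le_rfl
    obtain ⟨Q, hQ⟩ := Polynomial.dvd_iff_isRoot.2 hroot
    by_cases hQ0 : Q = 0
    · rw [hQ, hQ0, mul_zero]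
    have hdegQ : Q.natDegree ≤ N := by
      have hlc : (Polynomial.X - Polynomial.C ((d:ℕ):A)).leadingCoeff * Q.leadingCoeff ≠ 0 := by
        rw [Polynomial.leadingCoeff_X_sub_C, one_mul]
        exact Polynomial.leadingCoeff_ne_zero.2 hQ0
      have := Polynomial.natDegree_mul' hlc
      rw [← hQ, Polynomial.natDegree_X_sub_C] at this
      omega
    have hQz : Q = 0 := by
      refine ih Q (d+1) hdegQ ?_
      intro m hm
      have := h m (by omega)
      rw [hQ] at this
      simp only [Polynomial.eval_mul, Polynomial.eval_sub, Polynomial.eval_X,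
        Polynomial.eval_C] at this
      have hu : IsUnit ((m : A) - ((d : ℕ) : A)) := aux_unit K (by omega)
      obtain ⟨u, hu⟩ := hu
      rw [← hu] at this
      exact (Units.mul_right_eq_zero u).mp this
    rw [hQ, hQz, mul_zero]


lemma evalapply (K : Type*) {A : Type*} [CommSemiring K] [CommRing A] [Algebra K A]
    (δ : Polynomial (Module.End K A)) (s : ℕ) (x : A) :
    (Polynomial.eval (s : Module.End K A) δ) x
      = ∑ i ∈ Finset.range (δ.natDegree + 1), s ^ i • (δ.coeff i) x := by
  rw [Polynomial.eval_eq_sum_range, LinearMap.sum_apply]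
  refine Finset.sum_congr rfl fun i _ => ?_
  rw [Module.End.mul_apply, ← Nat.cast_pow, Module.End.natCast_apply, map_nsmul]


noncomputable def bp (K : Type*) [Field K] (n j : ℕ) : Polynomial K :=
  Polynomial.C ((j.factorial : K)⁻¹) * ∏ k ∈ Finset.range j, (X + C (n : K) - C (k : K))

lemma bp_eval_nat (K : Type*) [Field K] [CharZero K] (n j s : ℕ) (hj : j ≤ s + n) :
    (bp K n j).eval ((s : K)) = ((s + n).choose j : K) := by
  have hprod : ∏ k ∈ Finset.range j, ((s : K) + (n : K) - (k : K))
      = ((s + n).descFactorial j : K) := by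
    rw [Nat.descFactorial_eq_prod_range, Nat.cast_prod]
    refine Finset.prod_congr rfl fun k hk => ?_
    rw [Finset.mem_range] at hk
    rw [Nat.cast_sub (by omega)]
    push_cast; ring
  simp only [bp, eval_mul, eval_C, eval_prod, eval_sub, eval_add, eval_X]
  rw [hprod, Nat.descFactorial_eq_factorial_mul_choose]
  push_cast
  rw [← mul_assoc, inv_mul_cancel₀ (by exact_mod_cast j.factorial_ne_zero), one_mul]

lemma bp_eval_neg (K : Type*) [Field K] (n j : ℕ) (hj : 0 < j) :
    (bp K n j).eval (-(n : K)) = 0 := by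
  simp only [bp, eval_mul, eval_C, eval_prod, eval_sub, eval_add, eval_X]
  rw [Finset.prod_eq_zero (Finset.mem_range.mpr hj : 0 ∈ Finset.range j) (by push_cast; ring),
    mul_zero]

lemma bp_zero (K : Type*) [Field K] (n : ℕ) (x : K) : (bp K n 0).eval x = 1 := by
  simp [bp]



/-- If `f` is a nonzerodivisor, `g ≠ 0`, `g ∈ (f^{n-1}) \ (f^n)`,
and `b = b_{f,g}` is the relative Bernstein–Sato polynomial, then `b(-n) = 0`. -/
theorem stmt16 (K A : Type*) [Field K] [CharZero K] [CommRing A] [Algebra K A]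
    (f g : A) (hf : f ∈ nonZeroDivisors A) (hg : g ≠ 0)
    (n : ℕ) (hn : 0 < n)
    (hg1 : g ∈ Ideal.span {f ^ (n - 1)}) (hg2 : g ∉ Ideal.span {f ^ n})
    (b : Polynomial K) (hb : IsRelBSPoly K A f g b) :
    Polynomial.eval (-(n : K)) b = 0 := by
  obtain ⟨hmonic, ⟨δ, hδops, heq⟩, -⟩ := hb
  obtain ⟨h, hh⟩ := Ideal.mem_span_singleton'.mp hg1
  by_contra hc0
  apply hg2
  have hφ : ∀ x : K, algebraMap K A x = algebraMap K A x := fun _ => rfl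
  set φ := algebraMap K A with hφdef
  set N := δ.natDegree with hN
  choose ord hord using fun i => hδops i
  set d : ℕ := (Finset.range (N+1)).sup ord + 1 with hd
  have hd1 : 1 ≤ d := Nat.le_add_left 1 _
  have hdi : ∀ i ∈ Finset.range (N+1), IsDiffOpOfOrder K A d (δ.coeff i) := fun i hi =>
    isDiffOpOfOrder_mono K (Nat.le_succ_of_le (Finset.le_sup hi)) (hord i)
  set u : ℕ → ℕ → A := fun i j => ((brk K f)^[j] (δ.coeff i)) h with hu
  have key : ∀ s : ℕ, d ≤ s →
      ∑ i ∈ Finset.range (N+1), ∑ j ∈ Finset.range (d+1),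
        ((s:A))^i * (((s+n).choose j : A) * (f ^ (d - j) * u i j))
      = φ (b.eval (s:K)) * (f ^ (d-1) * h) := by
    intro s hs
    have e0 : f ^ (n-1) * f ^ (s+1) = f ^ (s+n) := by
      rw [← pow_add]; congr 1; omega
    have e1 : g * f ^ (s+1) = f ^ (s+n) * h := by
      rw [← hh, mul_assoc, e0, mul_comm]
    have e0' : f ^ (n-1) * f ^ s = f ^ (s+n-d) * f ^ (d-1) := by
      rw [← pow_add, ← pow_add]; congr 1; omega
    have e2 : g * f ^ s = f ^ (s+n-d) * (f ^ (d-1) * h) := by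
      rw [← hh, mul_assoc, e0']; ring
    have L2 : ∀ i ∈ Finset.range (N+1), (δ.coeff i) (f ^ (s+n) * h)
        = f ^ (s+n-d) * ∑ j ∈ Finset.range (d+1),
            ((s+n).choose j : A) * (f ^ (d - j) * u i j) := by
      intro i hi
      rw [expand K f (δ.coeff i) (s+n) h]
      rw [← Finset.sum_subset (Finset.range_subset_range.mpr (by omega : d+1 ≤ s+n+1))
        (fun j _ hj => by
          rw [Finset.mem_range, not_lt] at hj
          rw [brk_iterate_eq_zero K (hdi i hi) (by omega : d < j)]
          simp)]
      rw [Finset.mul_sum]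
      refine Finset.sum_congr rfl fun j hj => ?_
      rw [Finset.mem_range] at hj
      have : f ^ (s+n-j) = f ^ (s+n-d) * f ^ (d-j) := by
        rw [← pow_add]; congr 1; omega
      rw [nsmul_eq_mul, this]
      ring
    have hfe := heq s
    rw [e1, e2, evalapply, Algebra.smul_def, ← hN] at hfe
    rw [Finset.sum_congr rfl (fun i hi => by rw [L2 i hi])] at hfe
    have hfe2 : f ^ (s+n-d) * (∑ i ∈ Finset.range (N+1), ∑ j ∈ Finset.range (d+1),
        ((s:A))^i * (((s+n).choose j : A) * (f ^ (d - j) * u i j)))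
        = f ^ (s+n-d) * (φ (b.eval (s:K)) * (f ^ (d-1) * h)) := by
      calc f ^ (s+n-d) * (∑ i ∈ Finset.range (N+1), ∑ j ∈ Finset.range (d+1),
              ((s:A))^i * (((s+n).choose j : A) * (f ^ (d - j) * u i j)))
          = ∑ i ∈ Finset.range (N+1), s ^ i •
              (f ^ (s+n-d) * ∑ j ∈ Finset.range (d+1),
                ((s+n).choose j : A) * (f ^ (d - j) * u i j)) := by
            rw [Finset.mul_sum]
            refine Finset.sum_congr rfl fun i hi => ?_
            rw [nsmul_eq_mul, Nat.cast_pow, Finset.mul_sum, Finset.mul_sum, Finset.mul_sum]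
            refine Finset.sum_congr rfl fun j hj => ?_
            ring
        _ = φ (b.eval (s:K)) * (f ^ (s+n-d) * (f ^ (d-1) * h)) := hfe
        _ = f ^ (s+n-d) * (φ (b.eval (s:K)) * (f ^ (d-1) * h)) := by ring
    exact mul_cancel_left_mem_nonZeroDivisors (pow_mem hf (s+n-d)) |>.mp hfe2
  -- the polynomial
  set P : Polynomial A :=
    (∑ i ∈ Finset.range (N+1), ∑ j ∈ Finset.range (d+1),
      (X ^ i * (bp K n j).map φ) * C (f ^ (d - j) * u i j))
    - (b.map φ) * C (f ^ (d-1) * h) with hP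
  have hPeval : ∀ s : ℕ, d ≤ s → P.eval ((s : ℕ) : A) = 0 := by
    intro s hs
    have hcast : ((s : ℕ) : A) = φ ((s : ℕ) : K) := by simp [hφdef]
    rw [hP]
    simp only [Polynomial.eval_sub, Polynomial.eval_finset_sum, Polynomial.eval_mul,
      Polynomial.eval_pow, Polynomial.eval_X, Polynomial.eval_C]
    rw [sub_eq_zero]
    have hterm : ∀ i : ℕ, ∀ j ∈ Finset.range (d+1),
        ((s:ℕ):A) ^ i * Polynomial.eval ((s:ℕ):A) ((bp K n j).map φ) * (f ^ (d - j) * u i j)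
        = ((s:ℕ):A) ^ i * ((((s+n).choose j : ℕ) : A) * (f ^ (d - j) * u i j)) := by
      intro i j hj
      rw [Finset.mem_range] at hj
      rw [hcast, Polynomial.eval_map, Polynomial.eval₂_at_apply,
        bp_eval_nat K n j s (by omega)]
      simp only [map_natCast, mul_assoc]
    rw [Finset.sum_congr rfl (fun i _ => Finset.sum_congr rfl (fun j hj => hterm i j hj))]
    rw [hcast, Polynomial.eval_map, Polynomial.eval₂_at_apply, ← hcast]
    exact key s hs
  have hP0 : P = 0 := poly_zero_of_eval K P.natDegree P d le_rfl hPeval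
  -- evaluate P at φ(-(n:K))
  have hev := congrArg (Polynomial.eval (φ (-(n : K)))) hP0
  rw [hP] at hev
  simp only [Polynomial.eval_sub, Polynomial.eval_finset_sum, Polynomial.eval_mul,
    Polynomial.eval_pow, Polynomial.eval_X, Polynomial.eval_C, Polynomial.eval_zero,
    Polynomial.eval_map, Polynomial.eval₂_at_apply] at hev
  rw [sub_eq_zero] at hev
  have hj0 : ∀ i ∈ Finset.range (N+1),
      ∑ j ∈ Finset.range (d+1),
        φ (-(n:K)) ^ i * φ ((bp K n j).eval (-(n:K))) * (f ^ (d - j) * u i j)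
      = φ (-(n:K)) ^ i * (f ^ d * u i 0) := by
    intro i _
    rw [Finset.sum_eq_single_of_mem 0 (Finset.mem_range.mpr (by omega))
      (fun j _ hj => by rw [bp_eval_neg K n j (Nat.pos_of_ne_zero hj)]; simp)]
    simp only [bp_zero, map_one, mul_one, Nat.sub_zero]
  rw [Finset.sum_congr rfl hj0] at hev
  -- now: Σ_i φ(-n)^i * (f^d * δᵢ h) = φ(b(-n)) * (f^{d-1} * h)
  set w : A := ∑ i ∈ Finset.range (N+1), φ (-(n:K)) ^ i * (δ.coeff i) h with hw
  have hfd : f ^ d = f ^ (d-1) * f := by rw [← pow_succ, Nat.sub_add_cancel hd1]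
  have hev2 : f ^ (d-1) * (f * w) = f ^ (d-1) * (φ (b.eval (-(n:K))) * h) := by
    calc f ^ (d-1) * (f * w)
        = ∑ i ∈ Finset.range (N+1), φ (-(n:K)) ^ i * (f ^ d * u i 0) := by
          rw [hw, Finset.mul_sum, Finset.mul_sum]
          refine Finset.sum_congr rfl fun i _ => ?_
          have h2 : u i 0 = (δ.coeff i) h := rfl
          rw [h2, hfd]; ring
      _ = φ (b.eval (-(n:K))) * (f ^ (d-1) * h) := hev
      _ = f ^ (d-1) * (φ (b.eval (-(n:K))) * h) := by ring
  have hev3 : f * w = φ (b.eval (-(n:K))) * h :=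
    mul_cancel_left_mem_nonZeroDivisors (pow_mem hf (d-1)) |>.mp hev2
  -- conclude g ∈ (f^n)
  refine Ideal.mem_span_singleton'.mpr ⟨φ ((b.eval (-(n:K)))⁻¹) * w, ?_⟩
  have hfn : f ^ n = f ^ (n-1) * f := by rw [← pow_succ]; congr 1; omega
  rw [hfn, ← hh]
  calc φ ((b.eval (-(n:K)))⁻¹) * w * (f ^ (n-1) * f)
      = φ ((b.eval (-(n:K)))⁻¹) * (f * w) * f ^ (n-1) := by ring
    _ = φ ((b.eval (-(n:K)))⁻¹) * (φ (b.eval (-(n:K))) * h) * f ^ (n-1) := by rw [hev3]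
    _ = h * f ^ (n-1) := by
        rw [← mul_assoc, ← map_mul, inv_mul_cancel₀ hc0, map_one, one_mul]
end

section
/- Let A be a ℚ-algebra, f ∈ A \ {0}, and suppose every nonzero h ∈ A admits a relative Bernstein–Sato polynomial b_{f,h}(s) whose roots are all rational. Define, for λ ∈ ℚ, the ideal J(f^λ) = {g ∈ A : every root γ of b_{f,g}(-s) satisfies γ > λ} ∪ {0}. Assume the two lemmas: (a) if g ∈ (f^{n-1}) \ (f^n) then -n is a root of b_{f,g}(s); and (b) b_{f, f^n g}(s) = b_{f,g}(s+n). Then J(f^{λ+1}) = (f)·J(f^λ) for all λ ≥ 0 (Skoda's theorem for principal ideals). -/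
open Polynomial

/-- The multiplier-ideal-like set
`J(f^λ) = {g : every root γ of b_{f,g}(-s) satisfies γ > λ}`; note `0` belongs
automatically since `b_{f,0} = 1`. -/
def Jset (A : Type*) [CommRing A] [Algebra ℚ A] (f : A) (l : ℚ) : Set A :=
  {g : A | ∀ b : Polynomial ℚ, IsRelBSPoly ℚ A f g b →
    ∀ γ : ℚ, γ ≤ l → Polynomial.eval (-γ) b ≠ 0}

/-- Skoda's theorem for principal ideals: Let `A` be a
`ℚ`-algebra, `f ≠ 0`, and suppose every nonzero `h` admits a relative
Bernstein–Sato polynomial `b_{f,h}` with all roots rational (it splits over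
`ℚ`). Assuming (a) `g ∈ (f^{n-1}) \ (f^n)` forces `b_{f,g}(-n) = 0`, and
(b) `b_{f, f^n g}(s) = b_{f,g}(s+n)` (both directions), we have
`J(f^{λ+1}) = (f)·J(f^λ)` for all `λ ≥ 0`. -/
theorem stmt18 (A : Type*) [CommRing A] [Algebra ℚ A] (f : A) (hf : f ≠ 0)
    (hex : ∀ h : A, h ≠ 0 → ∃ b : Polynomial ℚ,
      IsRelBSPoly ℚ A f h b ∧ b.Splits)
    (ha : ∀ (g : A) (n : ℕ), 0 < n →
      g ∈ Ideal.span {f ^ (n - 1)} → g ∉ Ideal.span {f ^ n} →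
      ∀ b : Polynomial ℚ, IsRelBSPoly ℚ A f g b →
        Polynomial.eval (-(n : ℚ)) b = 0)
    (hb1 : ∀ (g : A) (n : ℕ) (b : Polynomial ℚ), IsRelBSPoly ℚ A f g b →
      IsRelBSPoly ℚ A f (f ^ n * g) (b.comp (Polynomial.X + Polynomial.C (n : ℚ))))
    (hb2 : ∀ (g : A) (n : ℕ) (b : Polynomial ℚ), IsRelBSPoly ℚ A f (f ^ n * g) b →
      IsRelBSPoly ℚ A f g (b.comp (Polynomial.X - Polynomial.C (n : ℚ))))
    (l : ℚ) (hl : 0 ≤ l) :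
    Jset A f (l + 1) = (f * ·) '' Jset A f l := by
  ext g
  simp only [Set.mem_image, Jset, Set.mem_setOf_eq]
  constructor
  · intro hg
    by_cases hg0 : g = 0
    · refine ⟨0, ?_, by simp [hg0]⟩
      intro b hb γ hγ
      have hsat : SatisfiesRelBS ℚ A f (0 : A) 1 := by
        refine ⟨0, fun i => ⟨0, 0, by simp⟩, fun s => by simp⟩
      have hdvd : b ∣ 1 := hb.2.2 1 hsat
      have := hb.1.eq_one_of_isUnit (isUnit_of_dvd_one hdvd)
      simp [this]
    · obtain ⟨b, hbB, -⟩ := hex g hg0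
      have hgf : g ∈ Ideal.span {f} := by
        by_contra hnot
        have h1 : g ∈ Ideal.span {f ^ (1 - 1)} := by
          simp [Ideal.span_singleton_one]
        have hz := ha g 1 one_pos h1 (by simpa using hnot) b hbB
        exact hg b hbB 1 (by linarith) (by simpa using hz)
      obtain ⟨g', rfl⟩ := Ideal.mem_span_singleton.mp hgf
      refine ⟨g', ?_, rfl⟩
      intro b' hb' γ hγ
      have h1 := hb1 g' 1 b' hb'
      rw [pow_one] at h1
      have h2 := hg _ h1 (γ + 1) (by linarith)
      intro hzero
      apply h2
      rw [Polynomial.eval_comp]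
      simp only [Polynomial.eval_add, Polynomial.eval_X, Polynomial.eval_C]
      convert hzero using 2
      · rfl
      push_cast
      ring
  · rintro ⟨g', hg', rfl⟩
    intro b hb γ hγ
    have h2 := hb2 g' 1 b (by rwa [pow_one])
    have h3 := hg' _ h2 (γ - 1) (by linarith)
    intro hzero
    apply h3
    rw [Polynomial.eval_comp]
    simp only [Polynomial.eval_sub, Polynomial.eval_X, Polynomial.eval_C]
    convert hzero using 2
    · rfl
    push_cast
    ring
end

section
/- Let b(s) ∈ ℤ[1/a][s] for some nonzero integer a, let N be a positive integer, and let Q(x) ∈ ℚ[x] be a polynomial. Fix an integer e > 0 and a residue class [i] ∈ (ℤ/Nℤ)^×. Suppose that for all sufficiently large primes p with p ≡ i (mod N), the value b(Q(p^e)) is a well-defined element of ℤ_{(p)} divisible by p (i.e., b(Q(p^e)) ≡ 0 mod p). Then Q(0) is a root of b, i.e., b(Q(0)) = 0. -/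
/-- Let `b, Q ∈ ℚ[x]` (so `b ∈ ℤ[1/a][s]` for suitable `a`),
`N > 0`, `i` coprime to `N`, and `e > 0`. If for all sufficiently large primes
`p ≡ i (mod N)` the rational number `b(Q(p^e))` lies in `ℤ_{(p)}` (its reduced
denominator is prime to `p`) and is divisible by `p` (its numerator is), then
`b(Q(0)) = 0`. -/
theorem stmt19 (b Q : Polynomial ℚ) (N : ℕ) (hN : 0 < N)
    (i : ℕ) (hi : Nat.Coprime i N) (e : ℕ) (he : 0 < e)
    (h : ∃ M : ℕ, ∀ p : ℕ, p.Prime → M ≤ p → p % N = i % N →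
      ¬ (p ∣ (Polynomial.eval (Polynomial.eval ((p : ℚ) ^ e) Q) b).den) ∧
      ((p : ℤ) ∣ (Polynomial.eval (Polynomial.eval ((p : ℚ) ^ e) Q) b).num)) :
    Polynomial.eval (Polynomial.eval 0 Q) b = 0 := by
  classical
  obtain ⟨M, hM⟩ := h
  haveI : NeZero N := ⟨hN.ne'⟩
  set R : Polynomial ℚ := b.comp Q with hR
  -- integer normalization: c • R has integer coefficients
  obtain ⟨c, hc⟩ := IsLocalization.integerNormalization_map_to_map (nonZeroDivisors ℤ)
    (R := ℤ) (S := ℚ) R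
  set P : Polynomial ℤ := IsLocalization.integerNormalization (nonZeroDivisors ℤ) R with hP
  have hcne : (c : ℤ) ≠ 0 := nonZeroDivisors.coe_ne_zero c
  -- key: for any integer t, (P.eval t : ℚ) = c * R.eval t
  have key : ∀ t : ℤ, ((P.eval t : ℤ) : ℚ) = ((c : ℤ) : ℚ) * R.eval (t : ℚ) := by
    intro t
    have := congrArg (Polynomial.eval ((t : ℤ) : ℚ)) hc
    simpa [Polynomial.eval_map, Polynomial.eval₂_at_natCast, Polynomial.eval_smul,
      Polynomial.eval₂_at_intCast, smul_eq_mul, Algebra.smul_def, algebraMap_int_eq,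
      Polynomial.eval_intCast_map] using this
  set r : ℚ := Polynomial.eval (Polynomial.eval 0 Q) b with hr
  -- find a big prime p ≡ i mod N
  have hu : IsUnit ((i : ZMod N)) := by
    simpa using (ZMod.unitOfCoprime i hi).isUnit
  obtain ⟨p, hpgt, hpp, hpmod⟩ := Nat.forall_exists_prime_gt_and_eq_mod hu
    (max M ((c : ℤ).natAbs + r.num.natAbs))
  have hpM : M ≤ p := le_trans (le_max_left _ _) hpgt.le
  have hpc : ((c : ℤ).natAbs : ℤ) < p := by
    have := lt_of_le_of_lt (le_max_right M _) hpgt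
    omega
  have hprnum : (r.num.natAbs : ℤ) < p := by
    have := lt_of_le_of_lt (le_max_right M _) hpgt
    omega
  have hpmod' : p % N = i % N := (ZMod.natCast_eq_natCast_iff' p i N).mp hpmod
  obtain ⟨hden, hnum⟩ := hM p hpp hpM hpmod'
  have hppz : Prime (p : ℤ) := Nat.prime_iff_prime_int.mp hpp
  -- p divides P.eval (p^e)
  set s : ℚ := Polynomial.eval (Polynomial.eval ((p : ℚ) ^ e) Q) b with hs
  have hsR : s = R.eval ((p : ℚ) ^ e) := by
    simp [hs, hR, Polynomial.eval_comp]
  have hrR : r = R.eval 0 := by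
    simp [hr, hR, Polynomial.eval_comp]
  have hkey1 : ((P.eval ((p : ℤ) ^ e) : ℤ) : ℚ) = ((c : ℤ) : ℚ) * s := by
    rw [hsR]; simpa using key ((p : ℤ) ^ e)
  have hkey0 : ((P.eval 0 : ℤ) : ℚ) = ((c : ℤ) : ℚ) * r := by
    rw [hrR]; simpa using key 0
  -- p ∣ P.eval (p^e): multiply by denominator
  have hd1 : (p : ℤ) ∣ P.eval ((p : ℤ) ^ e) := by
    have hq : P.eval ((p : ℤ) ^ e) * (s.den : ℤ) = (c : ℤ) * s.num := by
      have h2 : ((P.eval ((p : ℤ) ^ e) * (s.den : ℤ) : ℤ) : ℚ)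
          = (((c : ℤ) * s.num : ℤ) : ℚ) := by
        push_cast
        rw [hkey1, mul_assoc]
        norm_cast
        rw [Rat.mul_den_eq_num]
        push_cast
        ring
      exact_mod_cast h2
    have hpd : (p : ℤ) ∣ P.eval ((p : ℤ) ^ e) * (s.den : ℤ) := by
      rw [hq]; exact Dvd.dvd.mul_left hnum _
    rcases hppz.dvd_mul.mp hpd with h1 | h1
    · exact h1
    · exact absurd (Int.ofNat_dvd.mp h1) hden
  -- p ∣ P.eval 0 since p^e ≡ 0
  have hd0 : (p : ℤ) ∣ P.eval 0 := by
    have hsub : ((p : ℤ) ^ e - 0) ∣ P.eval ((p : ℤ) ^ e) - P.eval 0 :=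
      Polynomial.sub_dvd_eval_sub _ _ P
    have hpe : (p : ℤ) ∣ (p : ℤ) ^ e - 0 := by
      simpa using dvd_pow_self (p : ℤ) he.ne'
    have h3 : (p : ℤ) ∣ P.eval ((p : ℤ) ^ e) - P.eval 0 := hpe.trans hsub
    have h4 := dvd_sub hd1 h3
    simpa using h4
  -- so p ∣ c * r.num, and p ∤ c, hence p ∣ r.num
  have hq0 : P.eval 0 * (r.den : ℤ) = (c : ℤ) * r.num := by
    have h2 : ((P.eval 0 * (r.den : ℤ) : ℤ) : ℚ) = (((c : ℤ) * r.num : ℤ) : ℚ) := by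
      push_cast
      rw [hkey0, mul_assoc]
      norm_cast
      rw [Rat.mul_den_eq_num]
      push_cast
      ring
    exact_mod_cast h2
  have hdvdcr : (p : ℤ) ∣ (c : ℤ) * r.num := by
    rw [← hq0]; exact hd0.mul_right _
  have hpnotc : ¬ (p : ℤ) ∣ (c : ℤ) := by
    intro hdc
    have h5 : (p : ℤ) ∣ ((c : ℤ).natAbs : ℤ) := (Int.dvd_natAbs).mpr hdc
    have h6 : 0 < ((c : ℤ).natAbs : ℤ) := by
      exact_mod_cast Int.natAbs_pos.mpr hcne
    have := Int.le_of_dvd h6 h5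
    omega
  have hdvdr : (p : ℤ) ∣ r.num := by
    rcases hppz.dvd_mul.mp hdvdcr with h1 | h1
    · exact absurd h1 hpnotc
    · exact h1
  -- p > |r.num| forces r.num = 0
  have : r.num = 0 := by
    by_contra hne
    have h7 : p ∣ r.num.natAbs := by
      simpa using Int.natAbs_dvd_natAbs.mpr hdvdr
    have := Nat.le_of_dvd (Int.natAbs_pos.mpr hne) h7
    omega
  have : r = 0 := Rat.num_eq_zero.mp this
  simpa [hr] using this
end
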